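/- Let 𝒜 ⊆ M_n be a *-subalgebra with identity. For any projection p ∈ 𝒜 (p = p* = p²), the set {a hermitian in 𝒜 | p ⪯ p_0(a)} equals ℝ·id + p'𝒜⁺p', where p' = id − p, 𝒜⁺ is the cone of positive semidefinite elements of 𝒜, and p_0(a) is the ground projection of a. -/

import Mathlib

open Matrix
open scoped ComplexOrder

/-- The smallest eigenvalue (ground energy) of a matrix. -/
noncomputable def minEig {n : ℕ} (a : Matrix (Fin n) (Fin n) ℂ) : ℝ :=
  sInf {c : ℝ | ∃ v : Fin n → ℂ, v ≠ 0 ∧ a.mulVec v = (c : ℂ) • v}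

/-- The ground space of a hermitian matrix: the eigenspace of its smallest eigenvalue. -/
noncomputable def groundSpaceSet {n : ℕ} (a : Matrix (Fin n) (Fin n) ℂ) :
    Set (Fin n → ℂ) :=
  {v | a.mulVec v = (minEig a : ℂ) • v}

lemma real_smul_one_eq {n : ℕ} (t : ℝ) :
    t • (1 : Matrix (Fin n) (Fin n) ℂ) = ((t : ℂ)) • 1 := by
  ext i j
  simp [Matrix.smul_apply, Complex.real_smul]

lemma eig_lower {n : ℕ} {a : Matrix (Fin n) (Fin n) ℂ} {t : ℝ}
    (hpsd : (a - ((t : ℂ)) • (1 : Matrix (Fin n) (Fin n) ℂ)).PosSemidef)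
    {c : ℝ} {v : Fin n → ℂ} (hv : v ≠ 0)
    (heq : a.mulVec v = (c : ℂ) • v) : t ≤ c := by
  have h0 := hpsd.dotProduct_mulVec_nonneg v
  have hmv : (a - ((t : ℂ)) • (1 : Matrix (Fin n) (Fin n) ℂ)).mulVec v
      = (((c : ℂ) - t)) • v := by
    rw [sub_mulVec, heq, smul_mulVec, one_mulVec, sub_smul]
  rw [hmv, dotProduct_smul] at h0
  have hs : 0 < dotProduct (star v) v := dotProduct_star_self_pos_iff.mpr hv
  set s := dotProduct (star v) v with hs_def
  rw [Complex.lt_def] at hs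
  rw [Complex.le_def] at h0
  simp only [smul_eq_mul, Complex.mul_re, Complex.sub_re, Complex.ofReal_re,
    Complex.sub_im, Complex.ofReal_im, Complex.zero_re, Complex.zero_im] at h0 hs
  nlinarith [h0.1, hs.1, hs.2]

lemma psd_sub_min {n : ℕ} {a : Matrix (Fin n) (Fin n) ℂ} (hA : a.IsHermitian)
    {t : ℝ} (ht : ∀ i, t ≤ hA.eigenvalues i) :
    (a - ((t : ℂ)) • (1 : Matrix (Fin n) (Fin n) ℂ)).PosSemidef := by
  have key : a - ((t : ℂ)) • (1 : Matrix (Fin n) (Fin n) ℂ)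
      = (hA.eigenvectorUnitary : Matrix (Fin n) (Fin n) ℂ) *
        diagonal (fun i => ((hA.eigenvalues i - t : ℝ) : ℂ)) *
        (hA.eigenvectorUnitary : Matrix (Fin n) (Fin n) ℂ)ᴴ := by
    have hU : (hA.eigenvectorUnitary : Matrix (Fin n) (Fin n) ℂ) *
        (hA.eigenvectorUnitary : Matrix (Fin n) (Fin n) ℂ)ᴴ = 1 := by
      simpa [star_eq_conjTranspose] using
        (Matrix.mem_unitaryGroup_iff.mp (hA.eigenvectorUnitary).2)
    conv_lhs => rw [hA.spectral_theorem, Unitary.conjStarAlgAut_apply]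
    rw [← star_eq_conjTranspose]
    have : ((t : ℂ)) • (1 : Matrix (Fin n) (Fin n) ℂ)
        = (hA.eigenvectorUnitary : Matrix (Fin n) (Fin n) ℂ) *
          (((t : ℂ)) • (1 : Matrix (Fin n) (Fin n) ℂ)) *
          (star (hA.eigenvectorUnitary : Matrix (Fin n) (Fin n) ℂ)) := by
      rw [Matrix.mul_smul, Matrix.mul_one, Matrix.smul_mul]
      rw [star_eq_conjTranspose, hU]
    rw [this, ← Matrix.sub_mul, ← Matrix.mul_sub]
    congr 2
    ext i j
    by_cases h : i = j <;>
      simp [h, Matrix.sub_apply, Matrix.smul_apply, Matrix.one_apply, Matrix.diagonal_apply,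
        Function.comp]
  rw [key]
  refine (Matrix.posSemidef_diagonal_iff.mpr ?_).mul_mul_conjTranspose_same _
  intro i
  rw [Complex.zero_le_real]
  linarith [ht i]

theorem stmt6 {n : ℕ} (𝒜 : StarSubalgebra ℂ (Matrix (Fin n) (Fin n) ℂ))
    (p : Matrix (Fin n) (Fin n) ℂ) (hp : p ∈ 𝒜) (hpH : pᴴ = p) (hpi : p * p = p) :
    {a | a ∈ 𝒜 ∧ aᴴ = a ∧ Set.range p.mulVec ⊆ groundSpaceSet a}
      = {a | ∃ t : ℝ, ∃ b : Matrix (Fin n) (Fin n) ℂ, b ∈ 𝒜 ∧ b.PosSemidef ∧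
          a = t • (1 : Matrix (Fin n) (Fin n) ℂ) + (1 - p) * b * (1 - p)} := by
  ext a
  simp only [Set.mem_setOf_eq]
  constructor
  · rintro ⟨haA, haH, hgs⟩
    rcases Nat.eq_zero_or_pos n with hn | hn
    · refine ⟨0, 0, zero_mem 𝒜, Matrix.PosSemidef.zero, ?_⟩
      subst hn
      exact Subsingleton.elim _ _
    · haveI : Nonempty (Fin n) := ⟨⟨0, hn⟩⟩
      have hA : a.IsHermitian := haH
      obtain ⟨i₀, -, hi₀⟩ := Finset.exists_min_image Finset.univ hA.eigenvalues
        ⟨Classical.arbitrary _, Finset.mem_univ _⟩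
      set t := hA.eigenvalues i₀ with ht_def
      have ht : ∀ i, t ≤ hA.eigenvalues i := fun i => hi₀ i (Finset.mem_univ i)
      have hpsd := psd_sub_min hA ht
      have hvne : (⇑(hA.eigenvectorBasis i₀) : Fin n → ℂ) ≠ 0 := by
        intro h0
        apply hA.eigenvectorBasis.orthonormal.ne_zero i₀
        ext j
        exact congrFun h0 j
      have htS : t ∈ {c : ℝ | ∃ v : Fin n → ℂ, v ≠ 0 ∧ a.mulVec v = (c : ℂ) • v} := by
        refine ⟨_, hvne, ?_⟩
        have := hA.mulVec_eigenvectorBasis i₀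
        rw [this]
        ext j
        simp [Complex.real_smul, ht_def]
      have hmin : minEig a = t := by
        apply IsLeast.csInf_eq
        refine ⟨htS, fun c hc => ?_⟩
        obtain ⟨v, hv, heq⟩ := hc
        exact eig_lower hpsd hv heq
      set b := a - ((t : ℂ)) • (1 : Matrix (Fin n) (Fin n) ℂ) with hb_def
      have hbmem : b ∈ 𝒜 := by
        apply sub_mem haA
        rw [← Algebra.algebraMap_eq_smul_one]
        exact algebraMap_mem 𝒜 _
      have hbp : b * p = 0 := by
        ext i j
        have hu : a.mulVec (p.mulVec (Pi.single j 1))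
            = (minEig a : ℂ) • p.mulVec (Pi.single j 1) := hgs ⟨Pi.single j 1, rfl⟩
        have hz : b.mulVec (p.mulVec (Pi.single j 1)) = 0 := by
          rw [hb_def, sub_mulVec, hu, hmin, smul_mulVec, one_mulVec, sub_self]
        rw [mulVec_mulVec] at hz
        have := congrFun hz i
        simpa [mulVec_single] using this
      have hbH : bᴴ = b := by
        rw [hb_def, conjTranspose_sub, hA.eq, conjTranspose_smul, conjTranspose_one]
        simp
      have hpb : p * b = 0 := by
        have := congrArg conjTranspose hbp
        rwa [conjTranspose_mul, hpH, hbH, conjTranspose_zero] at this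
      refine ⟨t, b, hbmem, hpsd, ?_⟩
      have h1 : (1 - p) * b * (1 - p) = b := by
        rw [Matrix.sub_mul, Matrix.one_mul, hpb, sub_zero, Matrix.mul_sub, Matrix.mul_one,
          hbp, sub_zero]
      rw [h1, real_smul_one_eq, hb_def]
      abel
  · rintro ⟨t, b, hbA, hbpsd, rfl⟩
    have hq : ((1 : Matrix (Fin n) (Fin n) ℂ) - p)ᴴ = 1 - p := by
      rw [conjTranspose_sub, conjTranspose_one, hpH]
    have hmA : ((1 : Matrix (Fin n) (Fin n) ℂ) - p) * b * (1 - p) ∈ 𝒜 :=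
      mul_mem (mul_mem (sub_mem (one_mem 𝒜) hp) hbA) (sub_mem (one_mem 𝒜) hp)
    have hmH : (((1 : Matrix (Fin n) (Fin n) ℂ) - p) * b * (1 - p))ᴴ
        = (1 - p) * b * (1 - p) := by
      rw [conjTranspose_mul, conjTranspose_mul, hq, hbpsd.1, Matrix.mul_assoc]
    have hmpsd : (((1 : Matrix (Fin n) (Fin n) ℂ) - p) * b * (1 - p)).PosSemidef := by
      have := hbpsd.mul_mul_conjTranspose_same (1 - p)
      rwa [hq] at this
    refine ⟨?_, ?_, ?_⟩
    · apply add_mem ?_ hmA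
      rw [real_smul_one_eq, ← Algebra.algebraMap_eq_smul_one]
      exact algebraMap_mem 𝒜 _
    · rw [conjTranspose_add, hmH, real_smul_one_eq, conjTranspose_smul, conjTranspose_one]
      simp
    · rintro w ⟨v, rfl⟩
      set m := ((1 : Matrix (Fin n) (Fin n) ℂ) - p) * b * (1 - p) with hm_def
      set u := p.mulVec v with hu_def
      have h1p : ((1 : Matrix (Fin n) (Fin n) ℂ) - p) * p = 0 := by
        rw [Matrix.sub_mul, Matrix.one_mul, hpi, sub_self]
      have hmp : m * p = 0 := by
        rw [hm_def, Matrix.mul_assoc, h1p, Matrix.mul_zero]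
      have hmu : m.mulVec u = 0 := by
        rw [hu_def, mulVec_mulVec, hmp, zero_mulVec]
      have hau : (t • (1 : Matrix (Fin n) (Fin n) ℂ) + m).mulVec u = ((t : ℂ)) • u := by
        rw [add_mulVec, hmu, add_zero, real_smul_one_eq, smul_mulVec, one_mulVec]
      by_cases hu0 : u = 0
      · show _ ∈ groundSpaceSet _
        simp [groundSpaceSet, hu0]
      · have hps : ((t • (1 : Matrix (Fin n) (Fin n) ℂ) + m)
            - ((t : ℂ)) • (1 : Matrix (Fin n) (Fin n) ℂ)).PosSemidef := by
          rw [real_smul_one_eq, add_sub_cancel_left]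
          exact hmpsd
        have hmin : minEig (t • (1 : Matrix (Fin n) (Fin n) ℂ) + m) = t := by
          apply IsLeast.csInf_eq
          refine ⟨⟨u, hu0, hau⟩, fun c hc => ?_⟩
          obtain ⟨v', hv', heq⟩ := hc
          exact eig_lower hps hv' heq
        show _ ∈ groundSpaceSet _
        rw [groundSpaceSet, Set.mem_setOf_eq, hmin]
        exact hau
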